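/- Let D be a finite loopless digraph with M arcs and rates β_e > 0, δ_v > 0, and let u be a real number such that 1 + γ_e u ≠ 0 for every arc e with e⁻¹ ∉ A(D) and G_e ≠ 0 for every arc e with e⁻¹ ∈ A(D). Then I_M + u(J B′ + E) is invertible and its inverse is given entrywise by: ((I_M + u(J B′ + E))⁻¹)_{ee} = 1/(1 + γ_e u) if e⁻¹ ∉ A(D); ((I_M + u(J B′ + E))⁻¹)_{ee} = (1 + γ_{e⁻¹} u)/G_e and ((I_M + u(J B′ + E))⁻¹)_{e e⁻¹} = −u β_{e⁻¹}/G_e if e⁻¹ ∈ A(D); and all other entries are 0. -/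
import Mathlib


open Matrix BigOperators

/-- The reversal (inverse) of an arc. -/
def arcRev {V : Type*} (e : V × V) : V × V := (e.2, e.1)

/-- For a finite loopless digraph with rates `β`, `δ` and a real `u` such
that `1 + γ_e u ≠ 0` for every arc with `e⁻¹ ∉ A` and `G_e ≠ 0` for every arc with
`e⁻¹ ∈ A`, the matrix `I + u(J B′ + E)` is invertible and its inverse is given entrywise
by `1/(1 + γ_e u)` on the diagonal for specially-oriented arcs, by `(1 + γ_{e⁻¹} u)/G_e`
on the diagonal and `−u β_{e⁻¹}/G_e` in position `(e, e⁻¹)` for paired arcs, and `0`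
elsewhere. -/
theorem inverse_one_add_smul_JB_add_E
    {V : Type*} [Fintype V] [DecidableEq V]
    (A : Finset (V × V)) (hloopless : ∀ e ∈ A, e.1 ≠ e.2)
    (β : V × V → ℝ) (δ : V → ℝ)
    (hβ : ∀ e ∈ A, 0 < β e) (hδ : ∀ v : V, 0 < δ v)
    (γ : V × V → ℝ) (hγ : ∀ e : V × V, γ e = β e + δ e.1 + δ e.2)
    (u : ℝ)
    (G : V × V → ℝ)
    (hG : ∀ e : V × V,
      G e = (1 + γ e * u) * (1 + γ (arcRev e) * u) - β e * β (arcRev e) * u ^ 2)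
    (B' D1 D2 E : Matrix {e : V × V // e ∈ A} {e : V × V // e ∈ A} ℝ)
    (hB' : B' = Matrix.diagonal fun e => β e.val)
    (hD1 : D1 = Matrix.diagonal fun e => δ e.val.1)
    (hD2 : D2 = Matrix.diagonal fun e => δ e.val.2)
    (hE : E = B' + D1 + D2)
    (J : Matrix {e : V × V // e ∈ A} {e : V × V // e ∈ A} ℝ)
    (hJ : ∀ e f : {e : V × V // e ∈ A},
      J e f = if f.val = arcRev e.val then 1 else 0)
    (hu1 : ∀ e ∈ A, arcRev e ∉ A → 1 + γ e * u ≠ 0)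
    (hu2 : ∀ e ∈ A, arcRev e ∈ A → G e ≠ 0)
    (Minv : Matrix {e : V × V // e ∈ A} {e : V × V // e ∈ A} ℝ)
    (hMinv : ∀ e f : {e : V × V // e ∈ A},
      Minv e f =
        if e = f then
          (if arcRev e.val ∈ A then (1 + γ (arcRev e.val) * u) / G e.val
           else 1 / (1 + γ e.val * u))
        else if arcRev e.val ∈ A ∧ f.val = arcRev e.val then
          -(u * β (arcRev e.val)) / G e.val
        else 0) :
    IsUnit (1 + u • (J * B' + E)) ∧ (1 + u • (J * B' + E))⁻¹ = Minv := by
  classical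
  set M : Matrix {e : V × V // e ∈ A} {e : V × V // e ∈ A} ℝ := 1 + u • (J * B' + E)
    with hMdef
  have hrr : ∀ y : V × V, arcRev (arcRev y) = y := fun y => rfl
  have hGsymm : ∀ x : V × V, G (arcRev x) = G x := by
    intro x; rw [hG (arcRev x), hG x, hrr x]; ring
  have hne : ∀ e : {e : V × V // e ∈ A}, (e.val : V × V) ≠ arcRev e.val := by
    intro e h
    exact hloopless e.val e.2 (congrArg Prod.fst h)
  have hM : ∀ e f : {e : V × V // e ∈ A},
      M e f = (if f = e then 1 + γ e.val * u else 0)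
        + (if f.val = arcRev e.val then u * β (arcRev e.val) else 0) := by
    intro e f
    have hJB : (J * B') e f = if f.val = arcRev e.val then β (arcRev e.val) else 0 := by
      rw [hB', Matrix.mul_diagonal, hJ]
      by_cases h : f.val = arcRev e.val
      · simp [h]
      · simp [h]
    have hEf : E e f = if f = e then γ e.val else 0 := by
      rw [hE, hB', hD1, hD2]
      by_cases h : f = e
      · subst h; simp [Matrix.add_apply, Matrix.diagonal_apply_eq, hγ]
      · have h' : e ≠ f := fun h' => h h'.symm
        simp [Matrix.add_apply, Matrix.diagonal_apply_ne _ h', h]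
    rw [hMdef]
    simp only [Matrix.add_apply, Matrix.smul_apply, Matrix.one_apply, hJB, hEf,
      smul_eq_mul]
    by_cases h1 : f = e
    · subst h1
      simp only [if_pos rfl, if_neg (hne f)]
      simp only [eq_self_iff_true, if_true]
      ring
    · rw [if_neg h1, if_neg (fun h : e = f => h1 h.symm), if_neg h1]
      by_cases h2 : f.val = arcRev e.val
      · rw [if_pos h2, if_pos h2]; ring
      · rw [if_neg h2, if_neg h2]; ring
  have key : M * Minv = 1 := by
    ext e g
    rw [Matrix.mul_apply, Matrix.one_apply]
    have step1 : ∑ f, M e f * Minv f g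
        = (∑ f, (if f = e then (1 + γ e.val * u) * Minv f g else 0))
          + ∑ f, (if f.val = arcRev e.val then (u * β (arcRev e.val)) * Minv f g else 0) := by
      rw [← Finset.sum_add_distrib]
      refine Finset.sum_congr rfl fun f _ => ?_
      rw [hM, add_mul, ite_mul, ite_mul, zero_mul]
    rw [step1, Finset.sum_ite_eq' Finset.univ e (fun f => (1 + γ e.val * u) * Minv f g),
      if_pos (Finset.mem_univ e)]
    by_cases hrev : arcRev e.val ∈ A
    · have hsum2 : (∑ f, (if f.val = arcRev e.val then (u * β (arcRev e.val)) * Minv f g else 0))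
          = (u * β (arcRev e.val)) * Minv ⟨arcRev e.val, hrev⟩ g := by
        rw [Finset.sum_eq_single (⟨arcRev e.val, hrev⟩ : {e : V × V // e ∈ A})]
        · rw [if_pos rfl]
        · intro f _ hf
          exact if_neg (fun h : f.val = arcRev e.val => hf (Subtype.ext h))
        · intro h; exact absurd (Finset.mem_univ _) h
      rw [hsum2]
      have hef₀ : e ≠ (⟨arcRev e.val, hrev⟩ : {e : V × V // e ∈ A}) :=
        fun h => hne e (congrArg Subtype.val h)
      have hGe := hu2 e.val e.2 hrev
      have hGs : G (arcRev e.val) = G e.val := hGsymm e.val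
      have hMee : Minv e e = (1 + γ (arcRev e.val) * u) / G e.val := by
        rw [hMinv, if_pos rfl, if_pos hrev]
      have hMf₀e : Minv ⟨arcRev e.val, hrev⟩ e = -(u * β e.val) / G e.val := by
        rw [hMinv, if_neg (fun h => hef₀ h.symm), if_pos ⟨e.2, rfl⟩]
        show -(u * β e.val) / G (arcRev e.val) = _
        rw [hGs]
      have hMef₀ : Minv e ⟨arcRev e.val, hrev⟩ = -(u * β (arcRev e.val)) / G e.val := by
        rw [hMinv, if_neg hef₀, if_pos ⟨hrev, rfl⟩]
      have hMf₀f₀ : Minv ⟨arcRev e.val, hrev⟩ ⟨arcRev e.val, hrev⟩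
          = (1 + γ e.val * u) / G e.val := by
        rw [hMinv, if_pos rfl, if_pos (show arcRev (arcRev e.val) ∈ A from e.2)]
        show (1 + γ e.val * u) / G (arcRev e.val) = _
        rw [hGs]
      by_cases hg : g = e
      · subst hg
        rw [if_pos rfl, hMee, hMf₀e]
        have hexp : (1 + γ g.val * u) * ((1 + γ (arcRev g.val) * u) / G g.val)
            + u * β (arcRev g.val) * (-(u * β g.val) / G g.val) = G g.val / G g.val := by
          rw [hG g.val]; ring
        rw [hexp, div_self hGe]
      · rw [if_neg (fun h : e = g => hg h.symm)]
        by_cases hg₀ : g = (⟨arcRev e.val, hrev⟩ : {e : V × V // e ∈ A})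
        · rw [hg₀, hMef₀, hMf₀f₀]; ring
        · have h1 : Minv e g = 0 := by
            rw [hMinv, if_neg (fun h : e = g => hg h.symm),
              if_neg (fun h : _ ∧ g.val = arcRev e.val => hg₀ (Subtype.ext h.2))]
          have h2 : Minv ⟨arcRev e.val, hrev⟩ g = 0 := by
            rw [hMinv, if_neg (fun h => hg₀ h.symm),
              if_neg (fun h : arcRev (arcRev e.val) ∈ A ∧ g.val = arcRev (arcRev e.val) =>
                hg (Subtype.ext h.2))]
          rw [h1, h2]
          ring
    · have hsum2 : (∑ f, (if f.val = arcRev e.val then (u * β (arcRev e.val)) * Minv f g else 0))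
          = 0 := by
        refine Finset.sum_eq_zero fun f _ => ?_
        exact if_neg (fun h : f.val = arcRev e.val => hrev (h ▸ f.2))
      rw [hsum2, add_zero]
      by_cases hg : g = e
      · subst hg
        have h1 : Minv g g = 1 / (1 + γ g.val * u) := by
          rw [hMinv, if_pos rfl, if_neg hrev]
        rw [h1, if_pos rfl]
        field_simp [hu1 g.val g.2 hrev]
      · have h1 : Minv e g = 0 := by
          rw [hMinv, if_neg (fun h : e = g => hg h.symm),
            if_neg (fun h : arcRev e.val ∈ A ∧ _ => hrev h.1)]
        rw [h1, if_neg (fun h : e = g => hg h.symm)]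
        ring
  have key2 : Minv * M = 1 := mul_eq_one_comm.mp key
  exact ⟨⟨⟨M, Minv, key, key2⟩, rfl⟩, Matrix.inv_eq_right_inv key⟩
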